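/- Let g ≥ 2 and let X₁, …, X_{g−1}, Y be 2×2 complex matrices with each Xᵢ self-adjoint and Y self-adjoint positive semidefinite, all with (1,1)-entry equal to 0, and with some Xᵢ having nonzero off-diagonal entry a_i ≠ 0. Write Xᵢ = [[0, aᵢ],[āᵢ, bᵢ]] and Y = [[0, 0],[0, β]] (the (1,2)-entry of Y is forced to be 0 by positivity). Let F: D → [0, ∞) be a function on a neighborhood D of 0 in ℝ^{g−1} with F(x) ≤ ⟨Yv, v⟩ whenever x = (⟨X₁v, v⟩, …, ⟨X_{g−1}v, v⟩) ∈ D for a unit vector v ∈ ℂ². Then liminf_{x → 0} F(x)/‖x‖² < +∞. -/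

import Mathlib

open Matrix Filter
open scoped Topology

private lemma stmt11_coord_le (n : ℕ) (y : EuclideanSpace ℝ (Fin n)) (i : Fin n) :
    |y i| ≤ ‖y‖ := by
  rw [EuclideanSpace.norm_eq y, ← Real.sqrt_sq_eq_abs]
  apply Real.sqrt_le_sqrt
  have : y i ^ 2 ≤ ∑ j : Fin n, y j ^ 2 :=
    Finset.single_le_sum (fun j _ => sq_nonneg (y j)) (Finset.mem_univ i)
  simpa [Real.norm_eq_abs, sq_abs] using this

private lemma stmt11_formula (s t : ℝ) (u A : ℂ) (B : ℝ) (hu : u.re^2 + u.im^2 = 1) :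
    (dotProduct (star ![(s:ℂ), (t:ℂ) * u])
      (!![0, A; (starRingEnd ℂ) A, (B:ℂ)] *ᵥ ![(s:ℂ), (t:ℂ) * u])).re
    = 2 * (s * t) * (A * u).re + t^2 * B := by
  simp only [dotProduct, mulVec, Fin.sum_univ_two, Pi.star_apply, Matrix.of_apply,
    Matrix.cons_val_zero, Matrix.cons_val_one, Matrix.head_cons, Matrix.cons_val',
    Matrix.empty_val', Matrix.cons_val_fin_one, Matrix.vecHead, RCLike.star_def, Complex.add_re,
    Complex.mul_re, Complex.mul_im, Complex.add_im, Complex.conj_re, Complex.conj_im,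
    Complex.ofReal_re, Complex.ofReal_im, Complex.zero_re, Complex.zero_im]
  linear_combination (t^2*B) * hu

private lemma stmt11_Yformula (s t : ℝ) (u : ℂ) (B : ℝ) (hu : u.re^2 + u.im^2 = 1) :
    (dotProduct (star ![(s:ℂ), (t:ℂ) * u])
      (!![0, 0; 0, (B:ℂ)] *ᵥ ![(s:ℂ), (t:ℂ) * u])).re = t^2 * B := by
  simp only [dotProduct, mulVec, Fin.sum_univ_two, Pi.star_apply, Matrix.of_apply,
    Matrix.cons_val_zero, Matrix.cons_val_one, Matrix.head_cons, Matrix.cons_val',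
    Matrix.empty_val', Matrix.cons_val_fin_one, Matrix.vecHead, RCLike.star_def, Complex.add_re,
    Complex.mul_re, Complex.mul_im, Complex.add_im, Complex.conj_re, Complex.conj_im,
    Complex.ofReal_re, Complex.ofReal_im, Complex.zero_re, Complex.zero_im]
  linear_combination (t^2*B) * hu

private lemma stmt11_unit (s t : ℝ) (u : ℂ) (hu : u.re^2 + u.im^2 = 1) (hs : s^2 + t^2 = 1) :
    dotProduct (star ![(s:ℂ), (t:ℂ) * u]) ![(s:ℂ), (t:ℂ) * u] = 1 := by
  simp only [dotProduct, Fin.sum_univ_two, Pi.star_apply, Matrix.cons_val_zero,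
    Matrix.cons_val_one, Matrix.head_cons, RCLike.star_def]
  rw [Complex.ext_iff]
  constructor <;>
  simp only [Complex.add_re, Complex.mul_re, Complex.mul_im, Complex.add_im, Complex.conj_re,
    Complex.conj_im, Complex.ofReal_re, Complex.ofReal_im, Complex.one_re, Complex.one_im] <;>
  nlinarith [hu, hs]

/-- Theorem 3.10 (contrapositive core): a nontrivial self-adjoint `2 × 2` dilation
of `0` whose vector states obey `F(x) ≤ ⟨Yv, v⟩` forces
`liminf_{x → 0} F(x)/‖x‖² < ∞`, expressed as a frequently-bounded statement. -/
theorem stmt_11 (g : ℕ) (hg : 2 ≤ g)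
    (a : Fin (g - 1) → ℂ) (b : Fin (g - 1) → ℝ) (β : ℝ) (hβ : 0 ≤ β)
    (i₀ : Fin (g - 1)) (ha : a i₀ ≠ 0)
    (X : Fin (g - 1) → Matrix (Fin 2) (Fin 2) ℂ)
    (hX : ∀ i, X i = !![0, a i; (starRingEnd ℂ) (a i), (b i : ℂ)])
    (Y : Matrix (Fin 2) (Fin 2) ℂ) (hYdef : Y = !![0, 0; 0, (β : ℂ)])
    (D : Set (EuclideanSpace ℝ (Fin (g - 1)))) (hD : D ∈ 𝓝 (0 : EuclideanSpace ℝ (Fin (g - 1))))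
    (F : EuclideanSpace ℝ (Fin (g - 1)) → ℝ) (hF0 : ∀ x ∈ D, 0 ≤ F x)
    (hF : ∀ v : Fin 2 → ℂ, dotProduct (star v) v = 1 →
      ∀ hx : (show EuclideanSpace ℝ (Fin (g - 1)) from
          WithLp.toLp 2 (fun i => (dotProduct (star v) ((X i) *ᵥ v)).re)) ∈ D,
        F (show EuclideanSpace ℝ (Fin (g - 1)) from
          WithLp.toLp 2 (fun i => (dotProduct (star v) ((X i) *ᵥ v)).re)) ≤
          (dotProduct (star v) (Y *ᵥ v)).re) :
    ∃ C : ℝ, ∃ᶠ x in 𝓝[≠] (0 : EuclideanSpace ℝ (Fin (g - 1))), F x / ‖x‖ ^ 2 ≤ C := by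
  classical
  set c : ℝ := ‖a i₀‖ with hcdef
  have hc : 0 < c := by
    rw [hcdef]; exact norm_pos_iff.mpr ha
  have hcC : (c : ℂ) ≠ 0 := by exact_mod_cast hc.ne'
  set u : ℂ := (starRingEnd ℂ) (a i₀) / (c : ℂ) with hudef
  have hnsq : Complex.normSq u = 1 := by
    rw [hudef, Complex.normSq_div, Complex.normSq_conj, ← Complex.sq_norm, ← hcdef,
      Complex.normSq_ofReal]
    field_simp
  have hu : u.re ^ 2 + u.im ^ 2 = 1 := by
    have := hnsq
    rw [Complex.normSq_apply] at this
    nlinarith [this]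
  have hau : (a i₀ * u).re = c := by
    have h2 : a i₀ * u = (c : ℂ) := by
      rw [hudef, mul_div_assoc', Complex.mul_conj, ← Complex.sq_norm, ← hcdef]
      push_cast
      field_simp
    rw [h2, Complex.ofReal_re]
  -- the vector path and its state
  set s : ℝ → ℝ := fun t => Real.sqrt (1 - t ^ 2) with hsdef
  set v : ℝ → (Fin 2 → ℂ) := fun t => ![(s t : ℂ), (t : ℂ) * u] with hvdef
  set φ : ℝ → EuclideanSpace ℝ (Fin (g - 1)) :=
    fun t => (show EuclideanSpace ℝ (Fin (g - 1)) from
      WithLp.toLp 2 (fun i => (dotProduct (star (v t)) ((X i) *ᵥ (v t))).re)) with hφdef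
  have hφcomp : ∀ t : ℝ, ∀ i, φ t i = 2 * (s t * t) * (a i * u).re + t ^ 2 * b i := by
    intro t i
    rw [hφdef]
    show (dotProduct (star (v t)) ((X i) *ᵥ (v t))).re = _
    rw [hvdef, hX i]
    exact stmt11_formula (s t) t u (a i) (b i) hu
  -- constants
  set κ : ℝ := c / (1 + |b i₀|) with hκdef
  have hκ : 0 < κ := div_pos hc (by positivity)
  have hκc : κ * (1 + |b i₀|) = c := by
    rw [hκdef]; field_simp
  set δ : ℝ := min (1 / 2) κ with hδdef
  have hδ : 0 < δ := lt_min (by norm_num) hκ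
  -- key lower bound on the i₀ component
  have hlow : ∀ t ∈ Set.Ioo (0 : ℝ) δ, κ * t ≤ φ t i₀ := by
    intro t ht
    obtain ⟨ht0, htδ⟩ := ht
    have ht2 : t ≤ 1 / 2 := le_trans htδ.le (min_le_left _ _)
    have htκ : t ≤ κ := le_trans htδ.le (min_le_right _ _)
    have hshalf : 1 / 2 ≤ s t := by
      rw [hsdef]
      have : (1 / 2 : ℝ) = Real.sqrt (1 / 4) := by
        rw [show (1 / 4 : ℝ) = (1 / 2) ^ 2 by norm_num, Real.sqrt_sq (by norm_num)]
      rw [this]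
      apply Real.sqrt_le_sqrt
      nlinarith
    rw [hφcomp t i₀, hau]
    have hb1 : -(|b i₀|) ≤ b i₀ := neg_abs_le _
    nlinarith [mul_le_mul_of_nonneg_left htκ (abs_nonneg (b i₀)),
      mul_le_mul_of_nonneg_right hshalf ht0.le, abs_nonneg (b i₀)]
  -- tendsto of φ
  have htend : Tendsto φ (𝓝[>] (0 : ℝ)) (𝓝 0) := by
    suffices key : Tendsto (fun t => (φ t).ofLp) (𝓝[>] (0 : ℝ))
        (𝓝 (0 : EuclideanSpace ℝ (Fin (g - 1))).ofLp) from
      ((PiLp.continuous_toLp 2 _).tendsto _).comp key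
    rw [tendsto_pi_nhds]
    intro i
    have hcont : Continuous (fun t : ℝ => 2 * (Real.sqrt (1 - t ^ 2) * t) * (a i * u).re
        + t ^ 2 * b i) := by
      have h1 : Continuous fun t : ℝ => Real.sqrt (1 - t ^ 2) :=
        Real.continuous_sqrt.comp (by fun_prop)
      fun_prop
    have hval : Tendsto (fun t : ℝ => 2 * (Real.sqrt (1 - t ^ 2) * t) * (a i * u).re
        + t ^ 2 * b i) (𝓝 0) (𝓝 (0 : ℝ)) := by
      have h := hcont.tendsto 0
      have h0 : 2 * (Real.sqrt (1 - (0:ℝ) ^ 2) * 0) * (a i * u).re + (0:ℝ) ^ 2 * b i = 0 := by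
        norm_num
      rwa [h0] at h
    have h2 : Tendsto (fun t : ℝ => 2 * (Real.sqrt (1 - t ^ 2) * t) * (a i * u).re
        + t ^ 2 * b i) (𝓝[>] (0 : ℝ)) (𝓝 0) := hval.mono_left nhdsWithin_le_nhds
    have h3 : ((0 : EuclideanSpace ℝ (Fin (g - 1))) i) = 0 := rfl
    rw [h3]
    exact h2.congr (fun t => (hφcomp t i).symm)
  -- eventual facts on 𝓝[>] 0
  have hIoo : Set.Ioo (0 : ℝ) δ ∈ 𝓝[>] (0 : ℝ) := Ioo_mem_nhdsGT_of_mem (by simp [hδ])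
  have hmemD : ∀ᶠ t in 𝓝[>] (0 : ℝ), φ t ∈ D := htend.eventually_mem hD
  have hunit : ∀ t ∈ Set.Ioo (0 : ℝ) δ, dotProduct (star (v t)) (v t) = 1 := by
    intro t ht
    rw [hvdef]
    apply stmt11_unit _ _ _ hu
    rw [hsdef]
    rw [Real.sq_sqrt]
    · ring
    · nlinarith [ht.1, ht.2, lt_min_iff.mp (hδdef ▸ hδ), ht.2.trans_le (min_le_left (1/2 : ℝ) κ)]
  refine ⟨β / κ ^ 2, ?_⟩
  have hne : ∀ᶠ t in 𝓝[>] (0 : ℝ), φ t ≠ 0 := by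
    filter_upwards [hIoo] with t ht
    intro hzero
    have := hlow t ht
    rw [hzero] at this
    have h0 : (0 : EuclideanSpace ℝ (Fin (g - 1))) i₀ = 0 := rfl
    rw [h0] at this
    nlinarith [ht.1, hκ]
  have hmain : ∀ᶠ t in 𝓝[>] (0 : ℝ), F (φ t) / ‖φ t‖ ^ 2 ≤ β / κ ^ 2 := by
    filter_upwards [hIoo, hmemD] with t ht hmem
    have ht0 : 0 < t := ht.1
    -- F (φ t) ≤ β t²
    have hFle : F (φ t) ≤ t ^ 2 * β := by
      have := hF (v t) (hunit t ht) (by exact hmem)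
      rw [hYdef, hvdef] at this
      rw [stmt11_Yformula (s t) t u β hu] at this
      exact this
    -- norm lower bound
    have hnorm : κ * t ≤ ‖φ t‖ := by
      calc κ * t ≤ φ t i₀ := hlow t ht
        _ ≤ |φ t i₀| := le_abs_self _
        _ ≤ ‖φ t‖ := stmt11_coord_le _ _ _
    have hκt : 0 < κ * t := mul_pos hκ ht0
    have hnormsq : (κ * t) ^ 2 ≤ ‖φ t‖ ^ 2 := by
      apply pow_le_pow_left₀ hκt.le hnorm
    have hpos : 0 < ‖φ t‖ ^ 2 := lt_of_lt_of_le (by positivity) hnormsq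
    calc F (φ t) / ‖φ t‖ ^ 2 ≤ (t ^ 2 * β) / ‖φ t‖ ^ 2 := by
          gcongr
        _ ≤ (t ^ 2 * β) / (κ * t) ^ 2 := by
          apply div_le_div_of_nonneg_left (by positivity) (by positivity) hnormsq
        _ = β / κ ^ 2 := by
          field_simp
  have h2 : Tendsto φ (𝓝[>] (0 : ℝ)) (𝓝[≠] (0 : EuclideanSpace ℝ (Fin (g - 1)))) :=
    tendsto_nhdsWithin_iff.mpr ⟨htend, hne⟩
  exact h2.frequently hmain.frequently
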